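/- Let F be a free group of rank r ≥ 2 with 2r = k symmetrized generators, and fix 0 < ε ≤ 1. The number of reduced words of length n over the k letters that contain two distinct occurrences (possibly overlapping, possibly of the inverse) of some common subword of length m = ⌈εn⌉ is at most C·n²·(k−1)^{n−m} for a constant C depending only on k. -/

import Mathlib

/-- `v` occurs in `w` starting at position `i`. -/
def occursAt {X : Type*} (v w : List (X × Bool)) (i : ℕ) : Prop :=
  (w.drop i).take v.length = v

/-- The formal inverse of a word. -/
def wordInv {X : Type*} (v : List (X × Bool)) : List (X × Bool) :=
  (v.map (fun p => (p.1, !p.2))).reverse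

/-- `v` is a piece of `w`: a nontrivial subword occurring in at least two different
ways (possibly as the inverse, possibly overlapping). -/
def IsPiece {X : Type*} (v w : List (X × Bool)) : Prop :=
  v ≠ [] ∧ ((∃ i j, i ≠ j ∧ occursAt v w i ∧ occursAt v w j) ∨
    (∃ i j, occursAt v w i ∧ occursAt (wordInv v) w j))

/-- Reduced word length of an element of the free group. -/
def glen {X : Type*} [DecidableEq X] (g : FreeGroup X) : ℕ := g.toWord.length

/-- A subset of a free group is negligible if for some `ε > 0` all but finitely many of
its elements `p` have a piece of length at least `ε·|p|`. -/
def Negligible {X : Type*} [DecidableEq X] (P : Set (FreeGroup X)) : Prop :=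
  ∃ ε : ℝ, 0 < ε ∧
    {p ∈ P | ¬ ∃ v, IsPiece v p.toWord ∧ ε * glen p ≤ (v.length : ℝ)}.Finite

namespace CRWAux
open List

/-- The "no cancellation" relation on adjacent letters. -/
def R {X : Type*} (a b : X × Bool) : Prop := ¬(a.1 = b.1 ∧ b.2 = !a.2)

instance {X : Type*} [DecidableEq X] : DecidableRel (R (X := X)) := by
  intro a b; unfold R; infer_instance

set_option linter.unusedSectionVars false

section Basic

variable {X : Type*} [DecidableEq X]

lemma chain'_of_reduce {w : List (X × Bool)} (h : FreeGroup.reduce w = w) :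
    List.IsChain R w := by
  rw [List.isChain_iff_getElem]
  intro p hp
  by_contra hc
  rw [R, not_not] at hc
  obtain ⟨h1, h2⟩ := hc
  have hp1 : p + 1 < w.length := by omega
  have hp0 : p < w.length := by omega
  have hb : w.get ⟨p+1, hp1⟩ = ((w.get ⟨p, hp0⟩).1, !(w.get ⟨p, hp0⟩).2) := by
    apply Prod.ext
    · exact h1.symm
    · exact h2
  have hw : w = w.take p ++ (w.get ⟨p, hp0⟩) :: (w.get ⟨p+1, hp1⟩) :: w.drop (p+2) := by
    conv_lhs => rw [← List.take_append_drop p w]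
    congr 1
    rw [List.drop_eq_getElem_cons hp0, List.drop_eq_getElem_cons hp1]
    simp [List.get_eq_getElem]
  rw [hb] at hw
  exact FreeGroup.reduce.not (L₂ := w.take p) (x := (w.get ⟨p, hp0⟩).1)
    (b := (w.get ⟨p, hp0⟩).2) (by rw [h, ← hw])

lemma wordInv_length {v : List (X × Bool)} : (wordInv v).length = v.length := by
  simp [wordInv]

lemma wordInv_wordInv {v : List (X × Bool)} : wordInv (wordInv v) = v := by
  simp [wordInv, List.map_reverse, List.map_map]
  have : ((fun p : X × Bool => (p.1, !p.2)) ∘ (fun p : X × Bool => (p.1, !p.2))) = id := by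
    funext p; simp
  rw [this, List.map_id]

lemma wordInv_getElem? {v : List (X × Bool)} {t : ℕ} (ht : t < v.length) :
    (wordInv v)[t]? = (v[v.length - 1 - t]?).map (fun a => (a.1, !a.2)) := by
  rw [wordInv, List.getElem?_reverse (by simpa using ht), List.length_map,
    List.getElem?_map]

lemma occursAt_facts {v w : List (X × Bool)} {i : ℕ} (h : occursAt v w i)
    (hv : 0 < v.length) :
    i + v.length ≤ w.length ∧ ∀ t < v.length, w[i+t]? = v[t]? := by
  have hlen : min v.length (w.length - i) = v.length := by
    have := congrArg List.length h
    simpa using this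
  constructor
  · omega
  · intro t htl
    have : v[t]? = ((w.drop i).take v.length)[t]? := by rw [h]
    rw [List.getElem?_take, if_pos htl, List.getElem?_drop] at this
    exact this.symm

end Basic

section Counting

variable (X : Type*) [DecidableEq X] [Fintype X]

/-- Finset of reduced words of length `n`. -/
def F : ℕ → Finset (List (X × Bool))
  | 0 => {[]}
  | (n+1) => (((Finset.univ : Finset (X × Bool)) ×ˢ F n).filter
      (fun p : (X × Bool) × List (X × Bool) => List.IsChain R (p.1 :: p.2))).image (fun p => p.1 :: p.2)

variable {X}

lemma mem_F {w : List (X × Bool)} {n : ℕ} :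
    w ∈ F X n ↔ (List.IsChain R w ∧ w.length = n) := by
  induction n generalizing w with
  | zero =>
    simp only [F, Finset.mem_singleton]
    constructor
    · rintro rfl; exact ⟨List.isChain_nil, rfl⟩
    · rintro ⟨-, h⟩; exact List.length_eq_zero_iff.mp h
  | succ n ih =>
    simp only [F, Finset.mem_image, Finset.mem_filter, Finset.mem_product,
      Finset.mem_univ, true_and]
    constructor
    · rintro ⟨⟨a, t⟩, ⟨⟨ht, hc⟩, rfl⟩⟩
      exact ⟨hc, by simp [(ih.mp ht).2]⟩
    · rintro ⟨hc, hl⟩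
      cases w with
      | nil => simp at hl
      | cons a t =>
        refine ⟨⟨a, t⟩, ⟨⟨ih.mpr ⟨hc.tail, by simpa using hl⟩, hc⟩, rfl⟩⟩

lemma card_F_succ_le (n : ℕ) (hn : 1 ≤ n) :
    (F X (n+1)).card ≤ (Fintype.card (X × Bool) - 1) * (F X n).card := by
  classical
  have hsub : F X (n+1) ⊆ (F X n).biUnion (fun t =>
      (Finset.univ.filter (fun a => List.IsChain R (a :: t))).image (· :: t)) := by
    intro w hw
    obtain ⟨hc, hl⟩ := mem_F.mp hw
    cases w with
    | nil => simp at hl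
    | cons a t =>
      simp only [Finset.mem_biUnion, Finset.mem_image, Finset.mem_filter, Finset.mem_univ,
        true_and]
      exact ⟨t, mem_F.mpr ⟨hc.tail, by simpa using hl⟩, a, hc, rfl⟩
  refine (Finset.card_le_card hsub).trans ((Finset.card_biUnion_le).trans ?_)
  have hbound : ∀ t ∈ F X n,
      ((Finset.univ.filter (fun a => List.IsChain R (a :: t))).image (· :: t)).card ≤
        Fintype.card (X × Bool) - 1 := by
    intro t ht
    obtain ⟨hc, hl⟩ := mem_F.mp ht
    cases t with
    | nil => simp at hl; omega
    | cons h t' =>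
      refine (Finset.card_image_le).trans ?_
      have hsub2 : Finset.univ.filter (fun a => List.IsChain R (a :: h :: t')) ⊆
          Finset.univ.erase (h.1, !h.2) := by
        intro a ha
        simp only [Finset.mem_filter, Finset.mem_univ, true_and] at ha
        rw [List.isChain_cons_cons] at ha
        refine Finset.mem_erase.mpr ⟨?_, Finset.mem_univ _⟩
        rintro rfl
        exact ha.1 ⟨rfl, by simp⟩
      refine (Finset.card_le_card hsub2).trans ?_
      rw [Finset.card_erase_of_mem (Finset.mem_univ _), Finset.card_univ]
  calc ∑ t ∈ F X n, ((Finset.univ.filter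
        (fun a => List.IsChain R (a :: t))).image (· :: t)).card
      ≤ ∑ _t ∈ F X n, (Fintype.card (X × Bool) - 1) := Finset.sum_le_sum hbound
    _ = (F X n).card * (Fintype.card (X × Bool) - 1) := by
        rw [Finset.sum_const, smul_eq_mul]
    _ = _ := mul_comm _ _

lemma card_F_le (hr : 2 ≤ Fintype.card X) (n : ℕ) :
    (F X n).card ≤ 2 * (Fintype.card (X × Bool) - 1) ^ n := by
  have hk : 4 ≤ Fintype.card (X × Bool) := by
    rw [Fintype.card_prod, Fintype.card_bool]; omega
  induction n with
  | zero => simp [F]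
  | succ n ih =>
    cases n with
    | zero =>
      have : F X 1 ⊆ Finset.univ.image (fun a : X × Bool => [a]) := by
        intro w hw
        obtain ⟨-, hl⟩ := mem_F.mp hw
        cases w with
        | nil => simp at hl
        | cons a t =>
          simp only [List.length_cons, Nat.add_eq_right, List.length_eq_zero_iff] at hl
          subst hl
          exact Finset.mem_image.mpr ⟨a, Finset.mem_univ _, rfl⟩
      refine (Finset.card_le_card this).trans ?_
      refine (Finset.card_image_le).trans ?_
      rw [Finset.card_univ]
      have : Fintype.card (X × Bool) ≤ 2 * (Fintype.card (X × Bool) - 1) := by omega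
      simpa using this
    | succ n' =>
      refine (card_F_succ_le _ (by omega)).trans ?_
      calc (Fintype.card (X × Bool) - 1) * (F X (n'+1)).card
          ≤ (Fintype.card (X × Bool) - 1) * (2 * (Fintype.card (X × Bool) - 1) ^ (n'+1)) :=
            Nat.mul_le_mul_left _ ih
        _ = 2 * (Fintype.card (X × Bool) - 1) ^ (n'+2) := by ring

end Counting

section Cells

variable {X : Type*} [DecidableEq X]

/-- Positional condition for the two kinds of repeated occurrences. -/
def Acond (m i j : ℕ) : Bool → List (X × Bool) → Prop
  | false, w => i < j ∧ ∀ t < m, w[j+t]? = w[i+t]?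
  | true, w => i + m ≤ j ∧ ∀ t < m, w[j+t]? = (w[i+(m-1-t)]?).map (fun a => (a.1, !a.2))

/-- The cell of reduced words of length `n` with a repetition of type `(b, i, j)`. -/
def A (n m : ℕ) (b : Bool) (i j : ℕ) : Set (List (X × Bool)) :=
  {w | List.IsChain R w ∧ w.length = n ∧ j + m ≤ n ∧ Acond m i j b w}

lemma cover {n m : ℕ} (hm : 1 ≤ m) {w v : List (X × Bool)}
    (hred : List.IsChain R w) (hw : w.length = n) (hv : v.length = m)
    (hp : IsPiece v w) :
    ∃ b i j, i < n ∧ j < n ∧ w ∈ A n m b i j := by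
  obtain ⟨hne, hcase⟩ := hp
  have hv0 : 0 < v.length := by omega
  rcases hcase with ⟨i, j, hij, h1, h2⟩ | ⟨i, j, h1, h2⟩
  · -- same word twice
    obtain ⟨i', j', hlt, o1, o2⟩ : ∃ i' j', i' < j' ∧ occursAt v w i' ∧ occursAt v w j' := by
      rcases hij.lt_or_gt with h | h
      exacts [⟨i, j, h, h1, h2⟩, ⟨j, i, h, h2, h1⟩]
    obtain ⟨hi1, hi2⟩ := occursAt_facts o1 hv0
    obtain ⟨hj1, hj2⟩ := occursAt_facts o2 hv0
    refine ⟨false, i', j', by omega, by omega, hred, hw, by omega, hlt, ?_⟩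
    intro t ht
    rw [hj2 t (by omega), hi2 t (by omega)]
  · -- inverse occurrence
    obtain ⟨i', j', v', hv', hle, o1, o2⟩ :
        ∃ i' j' v', v'.length = m ∧ i' ≤ j' ∧ occursAt v' w i' ∧
          occursAt (wordInv v') w j' := by
      rcases le_or_gt i j with h | h
      · exact ⟨i, j, v, hv, h, h1, h2⟩
      · refine ⟨j, i, wordInv v, by rw [wordInv_length, hv], by omega, h2, ?_⟩
        rwa [wordInv_wordInv]
    have hv0' : 0 < v'.length := by omega
    have hvi0 : 0 < (wordInv v').length := by rw [wordInv_length]; omega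
    obtain ⟨hi1, hi2⟩ := occursAt_facts o1 hv0'
    obtain ⟨hj1, hj2⟩ := occursAt_facts o2 hvi0
    rw [wordInv_length] at hj1 hj2
    have key : ∀ t < m, w[j'+t]? = (w[i'+(m-1-t)]?).map (fun a => (a.1, !a.2)) := by
      intro t ht
      rw [hj2 t (by omega), wordInv_getElem? (by omega), hv',
        hi2 (m-1-t) (by omega)]
    -- rule out overlap using reducedness
    have hdisj : i' + m ≤ j' := by
      by_contra hcon
      have hov : j' < i' + m := by omega
      set s := i' + j' + m - 1 with hs
      set p := s / 2 with hp
      have ht0 : p - j' < m := by omega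
      have hjp : j' + (p - j') = p := by omega
      have := key (p - j') ht0
      rw [hjp] at this
      rcases Nat.even_or_odd s with ⟨c, hc⟩ | ⟨c, hc⟩
      · -- even: a self-inverse letter, impossible
        have hq : i' + (m - 1 - (p - j')) = p := by omega
        rw [hq] at this
        have hplt : p < w.length := by omega
        rw [List.getElem?_eq_getElem hplt] at this
        simp only [Option.map_some] at this
        have := congrArg Prod.snd (Option.some.inj this)
        simp at this
      · -- odd: an adjacent cancelling pair, contradicting reducedness
        have hq : i' + (m - 1 - (p - j')) = p + 1 := by omega
        rw [hq] at this
        have hplt : p + 1 < w.length := by omega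
        rw [List.getElem?_eq_getElem hplt, List.getElem?_eq_getElem (by omega)] at this
        simp only [Option.map_some] at this
        have heq := Option.some.inj this
        have hchain := List.isChain_iff_getElem.mp hred p (by omega)
        rw [R] at hchain
        apply hchain
        refine ⟨?_, ?_⟩
        · rw [heq]
        · rw [heq]; simp
    exact ⟨true, i', j', by omega, by omega, hred, hw, by omega, hdisj, key⟩

lemma injA {n m : ℕ} (b : Bool) (i j : ℕ) :
    Set.InjOn (fun w : List (X × Bool) => (w.take j, w.drop (j+m)))
      (A n m b i j) := by
  rintro w hwmem w' hwmem' heq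
  obtain ⟨-, hwl, hjm, hcond⟩ := hwmem
  obtain ⟨-, hwl', -, hcond'⟩ := hwmem'
  have htake : w.take j = w'.take j := congrArg Prod.fst heq
  have hdrop : w.drop (j+m) = w'.drop (j+m) := congrArg Prod.snd heq
  apply List.ext_getElem?
  intro p
  induction p using Nat.strong_induction_on with
  | _ p IH =>
    rcases lt_or_ge p j with hpj | hpj
    · have e1 : (w.take j)[p]? = w[p]? := by rw [List.getElem?_take, if_pos hpj]
      have e2 : (w'.take j)[p]? = w'[p]? := by rw [List.getElem?_take, if_pos hpj]
      rw [← e1, ← e2, htake]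
    · rcases le_or_gt (j + m) p with hpm | hpm
      · have e1 : (w.drop (j+m))[p - (j+m)]? = w[p]? := by
          rw [List.getElem?_drop]; congr 1; omega
        have e2 : (w'.drop (j+m))[p - (j+m)]? = w'[p]? := by
          rw [List.getElem?_drop]; congr 1; omega
        rw [← e1, ← e2, hdrop]
      · cases b with
        | false =>
          obtain ⟨hij, hkey⟩ := hcond
          obtain ⟨-, hkey'⟩ := hcond'
          have ht : p - j < m := by omega
          have h1 := hkey (p - j) ht
          have h2 := hkey' (p - j) ht
          rw [show j + (p - j) = p by omega] at h1 h2
          rw [h1, h2]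
          exact IH (i + (p - j)) (by omega)
        | true =>
          obtain ⟨hij, hkey⟩ := hcond
          obtain ⟨-, hkey'⟩ := hcond'
          have ht : p - j < m := by omega
          have h1 := hkey (p - j) ht
          have h2 := hkey' (p - j) ht
          rw [show j + (p - j) = p by omega] at h1 h2
          rw [h1, h2, IH (i + (m - 1 - (p - j))) (by omega)]

variable [Fintype X]

lemma A_finite (n m : ℕ) (b : Bool) (i j : ℕ) : (A (X := X) n m b i j).Finite := by
  apply Set.Finite.subset (List.finite_length_eq (X × Bool) n)
  intro w hw
  exact hw.2.1

lemma card_A_le (hr : 2 ≤ Fintype.card X) (n m : ℕ) (b : Bool) (i j : ℕ) :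
    (A (X := X) n m b i j).ncard ≤ 4 * (Fintype.card (X × Bool) - 1) ^ (n - m) := by
  rcases Set.eq_empty_or_nonempty (A (X := X) n m b i j) with he | ⟨w₀, hw₀⟩
  · rw [he, Set.ncard_empty]; exact Nat.zero_le _
  have hjm : j + m ≤ n := hw₀.2.2.1
  have himg : (fun w : List (X × Bool) => (w.take j, w.drop (j+m))) '' (A n m b i j) ⊆
      ↑(F X j ×ˢ F X (n - (j + m))) := by
    rintro _ ⟨w, hw, rfl⟩
    obtain ⟨hc, hl, hjm', -⟩ := hw
    rw [Finset.coe_product]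
    refine ⟨mem_F.mpr ⟨hc.prefix (List.take_prefix _ _), ?_⟩,
      mem_F.mpr ⟨hc.suffix (List.drop_suffix _ _), ?_⟩⟩
    · rw [List.length_take, hl]; omega
    · rw [List.length_drop, hl]
  calc (A (X := X) n m b i j).ncard
      = ((fun w : List (X × Bool) => (w.take j, w.drop (j+m))) '' (A n m b i j)).ncard :=
        (Set.ncard_image_of_injOn (injA b i j)).symm
    _ ≤ (↑(F X j ×ˢ F X (n - (j + m))) : Set _).ncard :=
        Set.ncard_le_ncard himg (Finset.finite_toSet _)
    _ = (F X j).card * (F X (n - (j + m))).card := by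
        rw [Set.ncard_coe_finset, Finset.card_product]
    _ ≤ (2 * (Fintype.card (X × Bool) - 1) ^ j) *
          (2 * (Fintype.card (X × Bool) - 1) ^ (n - (j+m))) :=
        Nat.mul_le_mul (card_F_le hr j) (card_F_le hr (n - (j+m)))
    _ = 4 * (Fintype.card (X × Bool) - 1) ^ (j + (n - (j+m))) := by
        rw [pow_add]; ring
    _ = 4 * (Fintype.card (X × Bool) - 1) ^ (n - m) := by
        congr 2; omega

end Cells

lemma ncard_biUnion_le {ι α : Type*} (s : Finset ι) (A : ι → Set α) :
    (⋃ i ∈ s, A i).ncard ≤ ∑ i ∈ s, (A i).ncard := by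
  classical
  induction s using Finset.induction with
  | empty => simp
  | insert a s hnotmem ih =>
    rw [Finset.set_biUnion_insert, Finset.sum_insert hnotmem]
    exact (Set.ncard_union_le _ _).trans (Nat.add_le_add_left ih _)

end CRWAux

theorem count_reduced_words_with_piece {X : Type*} [DecidableEq X] [Fintype X]
    (hr : 2 ≤ Fintype.card X) (ε : ℝ) (hε0 : 0 < ε) (hε1 : ε ≤ 1) :
    ∃ C : ℕ, ∀ n : ℕ,
      {w : List (X × Bool) | FreeGroup.reduce w = w ∧ w.length = n ∧
          ∃ v, v.length = ⌈ε * n⌉₊ ∧ IsPiece v w}.ncard ≤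
        C * n ^ 2 * (2 * Fintype.card X - 1) ^ (n - ⌈ε * n⌉₊) := by
  classical
  refine ⟨8, fun n => ?_⟩
  have hkk : 2 * Fintype.card X - 1 = Fintype.card (X × Bool) - 1 := by
    rw [Fintype.card_prod, Fintype.card_bool]; ring_nf
  rw [hkk]
  set m := ⌈ε * (n : ℝ)⌉₊ with hmdef
  rcases Nat.eq_zero_or_pos n with rfl | hn
  · have hempty : {w : List (X × Bool) | FreeGroup.reduce w = w ∧ w.length = 0 ∧
        ∃ v, v.length = ⌈ε * (0 : ℕ)⌉₊ ∧ IsPiece v w} = ∅ := by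
      apply Set.eq_empty_iff_forall_notMem.mpr
      rintro w ⟨-, -, v, hvl, hne, -⟩
      apply hne
      rw [← List.length_eq_zero_iff, hvl]
      simp
    rw [hempty, Set.ncard_empty]
    exact Nat.zero_le _
  have hm : 1 ≤ m := by
    rw [hmdef]
    exact Nat.ceil_pos.mpr (by positivity)
  set T : Finset (Bool × ℕ × ℕ) :=
    (Finset.univ : Finset Bool) ×ˢ Finset.range n ×ˢ Finset.range n with hT
  have hsub : {w : List (X × Bool) | FreeGroup.reduce w = w ∧ w.length = n ∧
        ∃ v, v.length = m ∧ IsPiece v w} ⊆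
      ⋃ x ∈ T, CRWAux.A n m x.1 x.2.1 x.2.2 := by
    rintro w ⟨hred, hlen, v, hvl, hpiece⟩
    obtain ⟨b, i, j, hi, hj, hmem⟩ :=
      CRWAux.cover hm (CRWAux.chain'_of_reduce hred) hlen hvl hpiece
    simp only [Set.mem_iUnion]
    exact ⟨(b, i, j), by simp [hT, hi, hj], hmem⟩
  calc {w : List (X × Bool) | FreeGroup.reduce w = w ∧ w.length = n ∧
          ∃ v, v.length = m ∧ IsPiece v w}.ncard
      ≤ (⋃ x ∈ T, CRWAux.A (X := X) n m x.1 x.2.1 x.2.2).ncard := by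
        refine Set.ncard_le_ncard hsub ?_
        exact Set.Finite.biUnion T.finite_toSet
          (fun x _ => CRWAux.A_finite n m x.1 x.2.1 x.2.2)
    _ ≤ ∑ x ∈ T, (CRWAux.A (X := X) n m x.1 x.2.1 x.2.2).ncard :=
        CRWAux.ncard_biUnion_le T _
    _ ≤ ∑ _x ∈ T, 4 * (Fintype.card (X × Bool) - 1) ^ (n - m) :=
        Finset.sum_le_sum (fun x _ => CRWAux.card_A_le hr n m x.1 x.2.1 x.2.2)
    _ = T.card * (4 * (Fintype.card (X × Bool) - 1) ^ (n - m)) := by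
        rw [Finset.sum_const, smul_eq_mul]
    _ = 8 * n ^ 2 * (Fintype.card (X × Bool) - 1) ^ (n - m) := by
        rw [hT]
        simp [Finset.card_product]
        ring
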